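/- Convolution estimate. Fix ε > 0 and let Ξ := {ξ ∈ ℂ : dist(ξ, [0,∞)) < ε}. Let m ≥ 1, let i₁,…,i_m be nonnegative integers, and set n := i₁ + ⋯ + i_m. Let f_{i₁},…,f_{i_m} be holomorphic functions on Ξ and suppose there are constants M_{i₁},…,M_{i_m}, L ≥ 0 such that |f_{i_k}(ξ)| ≤ M_{i_k}·|ξ|^{i_k}/(i_k)!·e^{L|ξ|} for all ξ ∈ Ξ and each k = 1,…,m. Then the m-fold convolution satisfies |(f_{i₁} ∗ ⋯ ∗ f_{i_m})(ξ)| ≤ M_{i₁}⋯M_{i_m}·|ξ|^{n+m−1}/(n+m−1)!·e^{L|ξ|} for all ξ ∈ Ξ. -/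

import Mathlib

open MeasureTheory

noncomputable section

/-- The `ε`-neighbourhood of the positive real axis in the Borel plane. -/
def Xi (ε : ℝ) : Set ℂ :=
  {ξ : ℂ | ∃ t : ℝ, 0 ≤ t ∧ dist ξ (t : ℂ) < ε}

/-- Convolution of two holomorphic functions along the straight segment from `0` to `ξ`. -/
def conv (φ ψ : ℂ → ℂ) (ξ : ℂ) : ℂ :=
  ∫ s in (0 : ℝ)..1, φ (ξ - (s : ℂ) * ξ) * ψ ((s : ℂ) * ξ) * ξ

/-- Iterated (multi-fold) convolution of a list of functions. -/
def multConv : List (ℂ → ℂ) → (ℂ → ℂ)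
  | [] => fun _ => 0
  | [g] => g
  | g :: h :: t => conv g (multConv (h :: t))

/-! ### Auxiliary lemmas -/

lemma prod_fact_nat (a b : ℕ) :
    (∏ j ∈ Finset.range (a + 1), (b + 1 + j)) * b.factorial = (a + b + 1).factorial := by
  induction a with
  | zero => simp [Nat.factorial_succ]
  | succ a ih =>
      rw [Finset.prod_range_succ, mul_right_comm, ih,
        show a + 1 + b + 1 = (a + b + 1) + 1 by omega, Nat.factorial_succ (a + b + 1)]
      ring

lemma beta_nat (a b : ℕ) :
    (∫ s in (0:ℝ)..1, s ^ b * (1 - s) ^ a)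
      = (a.factorial * b.factorial : ℝ) / ((a + b + 1).factorial : ℝ) := by
  have hu : 0 < Complex.re ((b : ℂ) + 1) := by
    simp only [Complex.add_re, Complex.natCast_re, Complex.one_re]
    positivity
  have h1 := Complex.betaIntegral_eval_nat_add_one_right hu a
  have h2 : Complex.betaIntegral ((b : ℂ) + 1) ((a : ℂ) + 1)
      = ((∫ s in (0:ℝ)..1, s ^ b * (1 - s) ^ a : ℝ) : ℂ) := by
    rw [Complex.betaIntegral, ← intervalIntegral.integral_ofReal]
    apply intervalIntegral.integral_congr
    intro x _
    have e1 : (b : ℂ) + 1 - 1 = ((b : ℕ) : ℂ) := by ring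
    have e2 : (a : ℂ) + 1 - 1 = ((a : ℕ) : ℂ) := by ring
    simp only [e1, e2, Complex.cpow_natCast]
    push_cast
    ring
  have hprod : (∏ j ∈ Finset.range (a + 1), ((b : ℂ) + 1 + j))
      = ((a + b + 1).factorial : ℂ) / (b.factorial : ℂ) := by
    have h := prod_fact_nat a b
    have hb : (b.factorial : ℂ) ≠ 0 := by exact_mod_cast b.factorial_ne_zero
    field_simp
    exact_mod_cast h
  rw [h1, hprod] at h2
  have hb : (b.factorial : ℂ) ≠ 0 := by exact_mod_cast b.factorial_ne_zero
  have habc : (((a + b + 1).factorial : ℝ) : ℂ) ≠ 0 := by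
    exact_mod_cast (a + b + 1).factorial_ne_zero
  have : ((a.factorial * b.factorial : ℝ) / ((a + b + 1).factorial : ℝ) : ℂ)
      = ((∫ s in (0:ℝ)..1, s ^ b * (1 - s) ^ a : ℝ) : ℂ) := by
    rw [← h2]
    push_cast
    field_simp
  exact_mod_cast this.symm

/-- The bound predicate: `‖φ ξ‖ ≤ A·‖ξ‖^a/a!·e^{L‖ξ‖}` on `Xi ε`, with `A ≥ 0`. -/
def Bd (ε L : ℝ) (a : ℕ) (A : ℝ) (φ : ℂ → ℂ) : Prop :=
  0 ≤ A ∧ ∀ ξ ∈ Xi ε, ‖φ ξ‖ ≤ A * ‖ξ‖ ^ a / (a.factorial : ℝ) * Real.exp (L * ‖ξ‖)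

lemma mem_Xi_smul {ε : ℝ} {ξ : ℂ} (hξ : ξ ∈ Xi ε) {s : ℝ} (h0 : 0 ≤ s) (h1 : s ≤ 1) :
    (s : ℂ) * ξ ∈ Xi ε := by
  obtain ⟨t, ht, hd⟩ := hξ
  refine ⟨s * t, mul_nonneg h0 ht, ?_⟩
  have e : ((s * t : ℝ) : ℂ) = (s : ℂ) * (t : ℂ) := by push_cast; ring
  rw [e]
  calc dist ((s:ℂ) * ξ) ((s:ℂ) * t) = ‖(s:ℂ)‖ * dist ξ t := by
        rw [dist_eq_norm, dist_eq_norm, ← mul_sub, norm_mul]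
    _ ≤ 1 * dist ξ t := by
        apply mul_le_mul_of_nonneg_right _ dist_nonneg
        rw [Complex.norm_real, Real.norm_eq_abs, abs_of_nonneg h0]; exact h1
    _ < ε := by rwa [one_mul]

lemma conv_bd {ε L : ℝ} {a b : ℕ} {A B : ℝ} {φ ψ : ℂ → ℂ}
    (hφ : Bd ε L a A φ) (hψ : Bd ε L b B ψ) :
    Bd ε L (a + b + 1) (A * B) (conv φ ψ) := by
  obtain ⟨hA, hφ⟩ := hφ
  obtain ⟨hB, hψ⟩ := hψ
  refine ⟨mul_nonneg hA hB, fun ξ hξ => ?_⟩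
  have hfa : (0:ℝ) < (a.factorial : ℝ) := by exact_mod_cast a.factorial_pos
  have hfb : (0:ℝ) < (b.factorial : ℝ) := by exact_mod_cast b.factorial_pos
  have hfab : (0:ℝ) < ((a + b + 1).factorial : ℝ) := by
    exact_mod_cast (a + b + 1).factorial_pos
  set C : ℝ := A * B * ‖ξ‖ ^ (a + b + 1) * Real.exp (L * ‖ξ‖) /
      ((a.factorial : ℝ) * (b.factorial : ℝ)) with hCdef
  have hC : 0 ≤ C := by positivity
  have key : ‖conv φ ψ ξ‖ ≤ |∫ s in (0:ℝ)..1, C * (s ^ b * (1 - s) ^ a)| := by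
    apply intervalIntegral.norm_integral_le_abs_of_norm_le
    · rw [Set.uIoc_of_le (by norm_num : (0:ℝ) ≤ 1)]
      filter_upwards [ae_restrict_mem measurableSet_Ioc] with s hs
      have hs0 : 0 ≤ s := le_of_lt hs.1
      have hs1 : s ≤ 1 := hs.2
      have e1 : ξ - (s : ℂ) * ξ = ((1 - s : ℝ) : ℂ) * ξ := by push_cast; ring
      have m1 : ((1 - s : ℝ) : ℂ) * ξ ∈ Xi ε := mem_Xi_smul hξ (by linarith) (by linarith)
      have m2 : ((s : ℝ) : ℂ) * ξ ∈ Xi ε := mem_Xi_smul hξ hs0 hs1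
      have n1 : ‖((1 - s : ℝ) : ℂ) * ξ‖ = (1 - s) * ‖ξ‖ := by
        rw [norm_mul, Complex.norm_real, Real.norm_eq_abs, abs_of_nonneg (by linarith : (0:ℝ) ≤ 1 - s)]
      have n2 : ‖((s : ℝ) : ℂ) * ξ‖ = s * ‖ξ‖ := by
        rw [norm_mul, Complex.norm_real, Real.norm_eq_abs, abs_of_nonneg hs0]
      have b1 := hφ _ m1
      rw [n1] at b1
      have b2 := hψ _ m2
      rw [n2] at b2
      calc ‖φ (ξ - (s:ℂ) * ξ) * ψ ((s:ℂ) * ξ) * ξ‖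
          = ‖φ (((1 - s : ℝ):ℂ) * ξ)‖ * ‖ψ (((s:ℝ):ℂ) * ξ)‖ * ‖ξ‖ := by
            rw [e1, norm_mul, norm_mul]
        _ ≤ (A * ((1 - s) * ‖ξ‖) ^ a / (a.factorial : ℝ) * Real.exp (L * ((1 - s) * ‖ξ‖))) *
              (B * (s * ‖ξ‖) ^ b / (b.factorial : ℝ) * Real.exp (L * (s * ‖ξ‖))) * ‖ξ‖ := by
            have h1s : (0:ℝ) ≤ 1 - s := by linarith
            apply mul_le_mul_of_nonneg_right _ (norm_nonneg _)
            apply mul_le_mul b1 b2 (norm_nonneg _)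
            exact mul_nonneg (div_nonneg (mul_nonneg hA
              (pow_nonneg (mul_nonneg h1s (norm_nonneg _)) a)) hfa.le) (Real.exp_pos _).le
        _ = C * (s ^ b * (1 - s) ^ a) := by
            have eexp : Real.exp (L * ((1 - s) * ‖ξ‖)) * Real.exp (L * (s * ‖ξ‖))
                = Real.exp (L * ‖ξ‖) := by
              rw [← Real.exp_add]; congr 1; ring
            rw [hCdef, ← eexp]
            simp only [mul_pow, pow_add, pow_one]
            field_simp
    · apply Continuous.intervalIntegrable
      continuity
  have hint : (∫ s in (0:ℝ)..1, C * (s ^ b * (1 - s) ^ a))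
      = C * ((a.factorial : ℝ) * (b.factorial : ℝ) / ((a + b + 1).factorial : ℝ)) := by
    rw [intervalIntegral.integral_const_mul, beta_nat]
  rw [hint] at key
  have habs : |C * ((a.factorial : ℝ) * (b.factorial : ℝ) / ((a + b + 1).factorial : ℝ))|
      = C * ((a.factorial : ℝ) * (b.factorial : ℝ) / ((a + b + 1).factorial : ℝ)) := by
    apply abs_of_nonneg
    positivity
  rw [habs] at key
  refine key.trans_eq ?_
  rw [hCdef]
  field_simp
  try ring

lemma multConv_cons {g : ℂ → ℂ} {l : List (ℂ → ℂ)} (h : l ≠ []) :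
    multConv (g :: l) = conv g (multConv l) := by
  cases l with
  | nil => exact absurd rfl h
  | cons h t => rfl

lemma main_aux (ε L : ℝ) : ∀ (m : ℕ) (idx : Fin (m + 1) → ℕ) (f : Fin (m + 1) → ℂ → ℂ)
    (Mc : Fin (m + 1) → ℝ), (∀ k, Bd ε L (idx k) (Mc k) (f k)) →
    Bd ε L ((∑ k, idx k) + m) (∏ k, Mc k) (multConv (List.ofFn f)) := by
  intro m
  induction m with
  | zero =>
      intro idx f Mc h
      simpa [List.ofFn_succ, multConv] using h 0
  | succ m ih =>
      intro idx f Mc h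
      have hofn : List.ofFn f = f 0 :: List.ofFn (fun i : Fin (m + 1) => f i.succ) :=
        List.ofFn_succ (f := f)
      have hne : List.ofFn (fun i : Fin (m + 1) => f i.succ) ≠ [] := by
        simp [← List.length_pos_iff]
      rw [hofn, multConv_cons hne]
      have h2 := ih (fun i => idx i.succ) (fun i => f i.succ) (fun i => Mc i.succ)
        (fun i => h i.succ)
      have h3 := conv_bd (h 0) h2
      have e : (∑ k, idx k) + (m + 1)
          = idx 0 + ((∑ i : Fin (m + 1), idx i.succ) + m) + 1 := by
        rw [Fin.sum_univ_succ]; omega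
      have e2 : (∏ k, Mc k) = Mc 0 * ∏ i : Fin (m + 1), Mc i.succ :=
        Fin.prod_univ_succ Mc
      rw [e, e2]
      exact h3

/-- **Convolution estimate.** If `|f_{i_k}(ξ)| ≤ M_{i_k}·|ξ|^{i_k}/i_k!·e^{L|ξ|}` on `Ξ`
for `k = 1, …, m`, then the `m`-fold convolution satisfies
`|(f_{i₁} ∗ ⋯ ∗ f_{i_m})(ξ)| ≤ M_{i₁}⋯M_{i_m}·|ξ|^{n+m−1}/(n+m−1)!·e^{L|ξ|}`,
where `n = i₁ + ⋯ + i_m`. -/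
theorem convolution_estimate
    (ε : ℝ) (hε : 0 < ε)
    (m : ℕ) (hm : 1 ≤ m)
    (idx : Fin m → ℕ)
    (f : Fin m → (ℂ → ℂ))
    (hf : ∀ k : Fin m, DifferentiableOn ℂ (f k) (Xi ε))
    (Mc : Fin m → ℝ) (hMc : ∀ k, 0 ≤ Mc k)
    (L : ℝ) (hL : 0 ≤ L)
    (hbd : ∀ k : Fin m, ∀ ξ ∈ Xi ε,
      ‖f k ξ‖ ≤ Mc k * ‖ξ‖ ^ idx k / ((idx k).factorial : ℝ) * Real.exp (L * ‖ξ‖)) :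
    ∀ ξ ∈ Xi ε,
      ‖multConv (List.ofFn f) ξ‖ ≤
        (∏ k, Mc k) * ‖ξ‖ ^ ((∑ k, idx k) + m - 1) /
          (((∑ k, idx k) + m - 1).factorial : ℝ) * Real.exp (L * ‖ξ‖) := by
  obtain ⟨m', rfl⟩ : ∃ m', m = m' + 1 := ⟨m - 1, by omega⟩
  have key := main_aux ε L m' idx f Mc (fun k => ⟨hMc k, hbd k⟩)
  have e : (∑ k, idx k) + (m' + 1) - 1 = (∑ k, idx k) + m' := by omega
  rw [e]
  exact key.2
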